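/- There exist x* ∈ (0,∞) and b* ∈ (0,1) such that for every b ∈ (0,b*) and every x ∈ (0,x*): φ_1(bx) − (1/b)·φ_{1,b}(x) < 0, b·φ_{1,b}(x) − φ_1(x) < 0, and Ψ_b(x) < 0. -/

import Mathlib

open MeasureTheory Real

noncomputable section

namespace DCV15

/-- `φ_1(x) = ∫_0^{2π} e^{−2x·sin(η/2)} cos η dη`. -/
def phi1 (x : ℝ) : ℝ :=
  ∫ η in (0:ℝ)..(2*π), Real.exp (-2*x*Real.sin (η/2)) * Real.cos η

/-- `φ_{1,b}(x) = ∫_0^{2π} e^{−x·√(1+b²−2b·cos η)} cos η dη`. -/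
def phi1b (b x : ℝ) : ℝ :=
  ∫ η in (0:ℝ)..(2*π), Real.exp (-x * Real.sqrt (1 + b^2 - 2*b*Real.cos η)) * Real.cos η

/-- `Ψ_b(x) = φ_1(x) + φ_1(bx) − (b+1/b)·φ_{1,b}(x)`. -/
def Psi (b x : ℝ) : ℝ := phi1 x + phi1 (b*x) - (b + 1/b) * phi1b b x


lemma sin_mul_cos_two (t : ℝ) : Real.sin t * Real.cos (2*t) = (1/2)*(Real.sin (3*t) - Real.sin t) := by
  rw [show (3:ℝ)*t = 2*t + t by ring, Real.sin_add, Real.sin_two_mul, Real.cos_two_mul]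
  have := Real.sin_sq_add_cos_sq t
  nlinarith [Real.sin_sq_add_cos_sq t]

lemma integral_sin_half_cos : ∫ η in (0:ℝ)..(2*π), Real.sin (η/2) * Real.cos η = -(4/3) := by
  have key : ∀ η ∈ Set.uIcc (0:ℝ) (2*π),
      HasDerivAt (fun s : ℝ => -(1/3)*Real.cos (3*s/2) + Real.cos (s/2))
        (Real.sin (η/2) * Real.cos η) η := by
    intro η _
    have h1 : HasDerivAt (fun s : ℝ => 3*s/2) (3/2) η := by
      simpa using ((hasDerivAt_id η).const_mul (3:ℝ)).div_const 2
    have h2 : HasDerivAt (fun s : ℝ => s/2) (1/2) η := by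
      simpa using (hasDerivAt_id η).div_const 2
    have hc1 : HasDerivAt (fun s : ℝ => Real.cos (3*s/2)) (-Real.sin (3*η/2) * (3/2)) η :=
      h1.cos
    have hc2 : HasDerivAt (fun s : ℝ => Real.cos (s/2)) (-Real.sin (η/2) * (1/2)) η :=
      h2.cos
    have := (hc1.const_mul (-(1/3):ℝ)).add hc2
    refine this.congr_deriv ?_
    have hid := sin_mul_cos_two (η/2)
    rw [show 2*(η/2) = η by ring] at hid
    rw [show 3*(η/2) = 3*η/2 by ring] at hid
    nlinarith [hid]
  have hint : IntervalIntegrable (fun η => Real.sin (η/2) * Real.cos η) MeasureTheory.volume 0 (2*π) := by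
    apply Continuous.intervalIntegrable; continuity
  rw [intervalIntegral.integral_eq_sub_of_hasDerivAt key hint]
  simp [show 3*(2*π)/2 = π + 2*π by ring, Real.cos_add, Real.cos_two_pi, Real.sin_two_pi, Real.cos_pi]
  norm_num

lemma phi1_est {y : ℝ} (h0 : 0 ≤ y) (h1 : y ≤ 1/2) : |phi1 y - (8/3)*y| ≤ 8*π*y^2 := by
  have hsplit : ∀ η : ℝ, Real.exp (-2*y*Real.sin (η/2)) * Real.cos η =
      ((Real.exp (-(2*y*Real.sin (η/2))) - 1 - (-(2*y*Real.sin (η/2)))) * Real.cos η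
        + Real.cos η) - 2*y*(Real.sin (η/2) * Real.cos η) := by
    intro η
    have : -2*y*Real.sin (η/2) = -(2*y*Real.sin (η/2)) := by ring
    rw [this]; ring
  have hr : Continuous fun η : ℝ =>
      (Real.exp (-(2*y*Real.sin (η/2))) - 1 - (-(2*y*Real.sin (η/2)))) * Real.cos η := by
    continuity
  have hI : phi1 y = (∫ η in (0:ℝ)..(2*π),
      (Real.exp (-(2*y*Real.sin (η/2))) - 1 - (-(2*y*Real.sin (η/2)))) * Real.cos η)
      + (∫ η in (0:ℝ)..(2*π), Real.cos η)
      - 2*y * ∫ η in (0:ℝ)..(2*π), Real.sin (η/2) * Real.cos η := by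
    rw [phi1]
    rw [intervalIntegral.integral_congr (g := fun η =>
      ((Real.exp (-(2*y*Real.sin (η/2))) - 1 - (-(2*y*Real.sin (η/2)))) * Real.cos η
        + Real.cos η) - 2*y*(Real.sin (η/2) * Real.cos η)) (fun η _ => hsplit η)]
    rw [intervalIntegral.integral_sub, intervalIntegral.integral_add,
        intervalIntegral.integral_const_mul]
    · exact hr.intervalIntegrable _ _
    · exact Real.continuous_cos.intervalIntegrable _ _
    · exact (hr.add Real.continuous_cos).intervalIntegrable _ _
    · exact (by continuity : Continuous fun η : ℝ => 2*y*(Real.sin (η/2)*Real.cos η)).intervalIntegrable _ _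
  rw [hI, integral_cos, integral_sin_half_cos, Real.sin_two_pi, Real.sin_zero]
  have hb : ‖∫ η in (0:ℝ)..(2*π),
      (Real.exp (-(2*y*Real.sin (η/2))) - 1 - (-(2*y*Real.sin (η/2)))) * Real.cos η‖ ≤
      4*y^2 * |2*π - 0| := by
    apply intervalIntegral.norm_integral_le_of_norm_le_const
    intro η hη
    rw [Set.uIoc_of_le (by positivity)] at hη
    have hs0 : 0 ≤ Real.sin (η/2) :=
      Real.sin_nonneg_of_nonneg_of_le_pi (by linarith [hη.1]) (by linarith [hη.2])
    have hs1 : Real.sin (η/2) ≤ 1 := Real.sin_le_one _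
    have habs : |(-(2*y*Real.sin (η/2)))| ≤ 1 := by
      rw [abs_neg, abs_of_nonneg (by positivity)]; nlinarith
    have := Real.abs_exp_sub_one_sub_id_le habs
    rw [Real.norm_eq_abs, abs_mul]
    calc |Real.exp (-(2*y*Real.sin (η/2))) - 1 - (-(2*y*Real.sin (η/2)))| * |Real.cos η|
        ≤ (-(2*y*Real.sin (η/2)))^2 * 1 := by
          apply mul_le_mul this (Real.abs_cos_le_one η) (abs_nonneg _) (by positivity)
      _ ≤ 4*y^2 := by
          nlinarith [mul_nonneg (sq_nonneg y)
            (mul_nonneg (by linarith : (0:ℝ) ≤ 1 - Real.sin (η/2))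
              (by linarith : (0:ℝ) ≤ 1 + Real.sin (η/2)))]
  have hπ : (0:ℝ) < π := Real.pi_pos
  rw [Real.norm_eq_abs, abs_of_nonneg (by linarith : (0:ℝ) ≤ 2*π - 0)] at hb
  calc |_| = |∫ η in (0:ℝ)..(2*π),
      (Real.exp (-(2*y*Real.sin (η/2))) - 1 - (-(2*y*Real.sin (η/2)))) * Real.cos η| := by
        congr 1; ring
    _ ≤ 4*y^2 * (2*π - 0) := hb
    _ = 8*π*y^2 := by ring

lemma phi1b_est {b x : ℝ} (hb : 0 < b) (hb1 : b ≤ 1/1000) (hx : 0 < x) (hx1 : x ≤ 1/100) :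
    |phi1b b x - Real.exp (-x) * (π*b*x)| ≤ 2*π*(4*b^2*x^2 + b^2*x) := by
  set u : ℝ → ℝ := fun η => Real.sqrt (1 + b^2 - 2*b*Real.cos η) with hu
  have hcont_u : Continuous u := by
    apply Real.continuous_sqrt.comp; continuity
  have hA : ∀ η : ℝ, (0:ℝ) ≤ 1 + b^2 - 2*b*Real.cos η := by
    intro η
    nlinarith [Real.neg_one_le_cos η, Real.cos_le_one η, sq_nonneg (1-b)]
  have hu_lb : ∀ η : ℝ, 1 - b*Real.cos η ≤ u η := by
    intro η
    show 1 - b*Real.cos η ≤ Real.sqrt (1 + b^2 - 2*b*Real.cos η)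
    refine (Real.le_sqrt (by nlinarith [Real.neg_one_le_cos η, Real.cos_le_one η]) (hA η)).mpr ?_
    nlinarith [mul_nonneg (sq_nonneg b)
      (by nlinarith [Real.neg_one_le_cos η, Real.cos_le_one η] : (0:ℝ) ≤ 1 - Real.cos η^2)]
  have hu_ub : ∀ η : ℝ, u η ≤ 1 - b*Real.cos η + b^2 := by
    intro η
    have hC : (0:ℝ) ≤ 1 - b*Real.cos η + b^2 := by
      nlinarith [Real.neg_one_le_cos η, Real.cos_le_one η]
    show Real.sqrt (1 + b^2 - 2*b*Real.cos η) ≤ 1 - b*Real.cos η + b^2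
    calc Real.sqrt (1 + b^2 - 2*b*Real.cos η) ≤ Real.sqrt ((1 - b*Real.cos η + b^2)^2) := by
          apply Real.sqrt_le_sqrt
          nlinarith [sq_nonneg (Real.cos η - b)]
      _ = 1 - b*Real.cos η + b^2 := Real.sqrt_sq hC
  have habs1u : ∀ η : ℝ, |1 - u η| ≤ 2*b := by
    intro η
    rw [abs_le]
    constructor
    · nlinarith [hu_ub η, Real.neg_one_le_cos η, Real.cos_le_one η]
    · nlinarith [hu_lb η, Real.neg_one_le_cos η, Real.cos_le_one η]
  -- factor exp(-x)
  have hfac : phi1b b x = Real.exp (-x) * ∫ η in (0:ℝ)..(2*π),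
      Real.exp (x*(1 - u η)) * Real.cos η := by
    rw [phi1b, ← intervalIntegral.integral_const_mul]
    apply intervalIntegral.integral_congr
    intro η _
    show Real.exp (-x * u η) * Real.cos η = Real.exp (-x) * (Real.exp (x*(1 - u η)) * Real.cos η)
    rw [show -x * u η = -x + x*(1 - u η) by ring, Real.exp_add, mul_assoc]
  set g : ℝ → ℝ := fun η => Real.exp (x*(1 - u η)) * Real.cos η - Real.cos η - b*x*Real.cos η^2
    with hg
  have hcont_g : Continuous g := by
    rw [hg]
    apply Continuous.sub
    apply Continuous.sub
    · exact (Real.continuous_exp.comp (continuous_const.mul (continuous_const.sub hcont_u))).mul Real.continuous_cos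
    · exact Real.continuous_cos
    · exact continuous_const.mul (Real.continuous_cos.pow 2)
  have hJ : (∫ η in (0:ℝ)..(2*π), Real.exp (x*(1 - u η)) * Real.cos η)
      = (∫ η in (0:ℝ)..(2*π), g η) + (∫ η in (0:ℝ)..(2*π), Real.cos η)
        + b*x * ∫ η in (0:ℝ)..(2*π), Real.cos η^2 := by
    rw [← intervalIntegral.integral_const_mul, ← intervalIntegral.integral_add
        (hcont_g.intervalIntegrable _ _) (Real.continuous_cos.intervalIntegrable _ _),
      ← intervalIntegral.integral_add (f := fun η => g η + Real.cos η) (g := fun η => b*x*Real.cos η^2)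
        ((hcont_g.add Real.continuous_cos).intervalIntegrable _ _)
        ((continuous_const.mul (Real.continuous_cos.pow 2)).intervalIntegrable _ _)]
    apply intervalIntegral.integral_congr
    intro η _
    simp only [hg]
    ring
  have hgb : ‖∫ η in (0:ℝ)..(2*π), g η‖ ≤ (4*b^2*x^2 + b^2*x) * |2*π - 0| := by
    apply intervalIntegral.norm_integral_le_of_norm_le_const
    intro η _
    have hs : |x*(1 - u η)| ≤ 2*b*x := by
      rw [abs_mul, abs_of_nonneg hx.le]
      calc x * |1 - u η| ≤ x * (2*b) := by
            exact mul_le_mul_of_nonneg_left (habs1u η) hx.le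
        _ = 2*b*x := by ring
    have hs1 : |x*(1 - u η)| ≤ 1 := by nlinarith
    have hexp := Real.abs_exp_sub_one_sub_id_le hs1
    have hlin : |x*(1 - u η) - b*x*Real.cos η| ≤ b^2*x := by
      rw [abs_le]
      constructor
      · nlinarith [hu_ub η]
      · nlinarith [hu_lb η]
    have hdecomp : g η = (Real.exp (x*(1 - u η)) - 1 - x*(1 - u η)) * Real.cos η
        + (x*(1 - u η) - b*x*Real.cos η) * Real.cos η := by
      simp only [hg]; ring
    rw [Real.norm_eq_abs, hdecomp]
    calc |(Real.exp (x*(1 - u η)) - 1 - x*(1 - u η)) * Real.cos η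
        + (x*(1 - u η) - b*x*Real.cos η) * Real.cos η|
        ≤ |(Real.exp (x*(1 - u η)) - 1 - x*(1 - u η)) * Real.cos η|
          + |(x*(1 - u η) - b*x*Real.cos η) * Real.cos η| := abs_add_le _ _
      _ ≤ (x*(1 - u η))^2 * 1 + b^2*x * 1 := by
          rw [abs_mul, abs_mul]
          exact add_le_add
            (mul_le_mul hexp (Real.abs_cos_le_one η) (abs_nonneg _) (sq_nonneg _))
            (mul_le_mul hlin (Real.abs_cos_le_one η) (abs_nonneg _) (by positivity))
      _ ≤ 4*b^2*x^2 + b^2*x := by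
          have h2 := abs_le.mp hs
          nlinarith [h2.1, h2.2]
  have hπ : (0:ℝ) < π := Real.pi_pos
  rw [Real.norm_eq_abs, abs_of_nonneg (by linarith : (0:ℝ) ≤ 2*π - 0)] at hgb
  have hcos2 : (∫ η in (0:ℝ)..(2*π), Real.cos η^2) = π := by
    rw [integral_cos_sq]
    simp [Real.sin_two_pi, Real.cos_two_pi]
    try ring
  have hexpx : Real.exp (-x) ≤ 1 := by
    rw [Real.exp_le_one_iff]; linarith
  have hexpp : 0 < Real.exp (-x) := Real.exp_pos _
  rw [hfac, hJ, integral_cos, hcos2, Real.sin_two_pi, Real.sin_zero]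
  rw [show Real.exp (-x) * ((∫ η in (0:ℝ)..(2*π), g η) + (0 - 0) + b*x*π) - Real.exp (-x)*(π*b*x)
      = Real.exp (-x) * (∫ η in (0:ℝ)..(2*π), g η) by ring]
  rw [abs_mul, abs_of_nonneg hexpp.le]
  calc Real.exp (-x) * |∫ η in (0:ℝ)..(2*π), g η| ≤ 1 * ((4*b^2*x^2 + b^2*x) * (2*π - 0)) :=
        mul_le_mul hexpx hgb (abs_nonneg _) one_pos.le
    _ = 2*π*(4*b^2*x^2 + b^2*x) := by ring


set_option maxHeartbeats 1000000 in
/-- There exist `x* ∈ (0,∞)` and `b* ∈ (0,1)` such that for every `b ∈ (0,b*)` and every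
`x ∈ (0,x*)`: `φ_1(bx) − (1/b)·φ_{1,b}(x) < 0`, `b·φ_{1,b}(x) − φ_1(x) < 0` and `Ψ_b(x) < 0`. -/
theorem negativity_near_zero :
    ∃ xs : ℝ, 0 < xs ∧ ∃ bs : ℝ, bs ∈ Set.Ioo (0:ℝ) 1 ∧
      ∀ b ∈ Set.Ioo (0:ℝ) bs, ∀ x ∈ Set.Ioo (0:ℝ) xs,
        phi1 (b*x) - (1/b) * phi1b b x < 0 ∧
        b * phi1b b x - phi1 x < 0 ∧
        Psi b x < 0 := by
  refine ⟨1/100, by norm_num, 1/1000, ⟨by norm_num, by norm_num⟩, ?_⟩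
  rintro b ⟨hb0, hbu⟩ x ⟨hx0, hxu⟩
  have hbu' : b < 1/1000 := hbu
  have hxu' : x < 1/100 := hxu
  have hbx : 0 < b*x := mul_pos hb0 hx0
  have hπ0 : (0:ℝ) < π := Real.pi_pos
  have hπl : (3141592/1000000 : ℝ) < π := by
    have := Real.pi_gt_d6; norm_num at this ⊢; linarith
  have hπu : π < (315/100 : ℝ) := by
    have := Real.pi_lt_d2; norm_num at this ⊢; linarith
  have hexp_lb : 1 - x ≤ Real.exp (-x) := by
    have := Real.add_one_le_exp (-x); linarith
  have hexp_ub : Real.exp (-x) ≤ 1 := by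
    rw [Real.exp_le_one_iff]; linarith
  have hsm1 : b*(b*x) ≤ (1/1000)*(b*x) :=
    mul_le_mul_of_nonneg_right (by linarith) hbx.le
  have hsm2 : b*x ≤ (1/1000)*x :=
    mul_le_mul_of_nonneg_right (by linarith) hx0.le
  have hA1 := abs_le.mp (phi1_est hx0.le (by linarith))
  have hA2 := abs_le.mp (phi1_est hbx.le (by linarith))
  have hB := abs_le.mp (phi1b_est hb0 (by linarith) hx0 (by linarith))
  -- error bound for phi1b
  have hπb : π*b ≤ (315/100)*(1/1000) :=
    mul_le_mul hπu.le hbu'.le hb0.le (by norm_num)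
  have h4x : 4*x+1 ≤ 104/100 := by linarith
  have h1' : (π*b)*(4*x+1) ≤ ((315/100)*(1/1000))*(104/100) :=
    mul_le_mul hπb h4x (by linarith) (by norm_num)
  have h1 : 2*π*b*(4*x+1) ≤ 7/1000 := by linarith [h1']
  have herr : 2*π*(4*b^2*x^2 + b^2*x) ≤ (7/1000)*(b*x) := by
    have h := mul_le_mul_of_nonneg_right h1 hbx.le
    linarith [h]
  -- main term bounds for phi1b
  have hs : (311/100 : ℝ) ≤ (1-x)*π := by
    linarith [mul_nonneg (by linarith : (0:ℝ) ≤ 1/100 - x) hπ0.le]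
  have hQ1 : (311/100)*(b*x) ≤ (1-x)*(π*b*x) := by
    have h := mul_le_mul_of_nonneg_right hs hbx.le
    linarith [h]
  have hEpi_lb : (1 - x)*(π*b*x) ≤ Real.exp (-x) * (π*b*x) :=
    mul_le_mul_of_nonneg_right hexp_lb (by positivity)
  have hEpi_ub : Real.exp (-x) * (π*b*x) ≤ π*b*x := by
    have h := mul_le_mul_of_nonneg_right hexp_ub (show (0:ℝ) ≤ π*b*x by positivity)
    linarith [h]
  have hπbx : π*b*x ≤ (315/100)*(b*x) := by
    have h := mul_le_mul_of_nonneg_right hπu.le hbx.le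
    linarith [h]
  have hQ_lb : (31/10)*(b*x) ≤ phi1b b x := by linarith [hB.1]
  have hQ_ub : phi1b b x ≤ (32/10)*(b*x) := by linarith [hB.2]
  have hQpos : 0 < phi1b b x := by linarith
  -- phi1 bounds
  have hx2 : x^2 ≤ (1/100)*x := by linarith [mul_le_mul_of_nonneg_left hxu'.le hx0.le]
  have h8π : 8*π*x^2 ≤ 8*(315/100)*((1/100)*x) := by
    linarith [mul_le_mul_of_nonneg_left hx2 (by positivity : (0:ℝ) ≤ 8*π),
      mul_le_mul_of_nonneg_right hπu.le (by positivity : (0:ℝ) ≤ 8*((1/100)*x))]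
  have hP1_ub : phi1 x ≤ (292/100)*x := by linarith [hA1.2]
  have hP1_lb : (24/10)*x ≤ phi1 x := by linarith [hA1.1]
  have hbxu : b*x ≤ (1/1000)*(1/100) :=
    mul_le_mul hbu'.le hxu'.le hx0.le (by norm_num)
  have hbx2 : (b*x)^2 ≤ (1/100000)*(b*x) := by
    linarith [mul_le_mul_of_nonneg_left hbxu hbx.le]
  have h8πb : 8*π*(b*x)^2 ≤ 8*(315/100)*((1/100000)*(b*x)) := by
    linarith [mul_le_mul_of_nonneg_left hbx2 (by positivity : (0:ℝ) ≤ 8*π),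
      mul_le_mul_of_nonneg_right hπu.le (by positivity : (0:ℝ) ≤ 8*((1/100000)*(b*x)))]
  have hP1b_ub : phi1 (b*x) ≤ 3*(b*x) := by linarith [hA2.2]
  refine ⟨?_, ?_, ?_⟩
  · -- phi1 (b*x) - (1/b) * phi1b b x < 0
    have hgoal : phi1 (b*x) < (1/b) * phi1b b x := by
      rw [show (1/b) * phi1b b x = phi1b b x / b by ring, lt_div_iff₀ hb0]
      linarith [mul_le_mul_of_nonneg_right hP1b_ub hb0.le, hsm1, hQ_lb, hbx]
    linarith
  · -- b * phi1b b x - phi1 x < 0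
    have hbQ : b * phi1b b x ≤ b * ((32/10)*(b*x)) :=
      mul_le_mul_of_nonneg_left hQ_ub hb0.le
    linarith [hbQ, hsm1, hsm2, hP1_lb, hx0]
  · -- Psi b x < 0
    have hinv : (31/10)*x ≤ (1/b)*phi1b b x := by
      rw [show (1/b)*phi1b b x = phi1b b x / b by ring, le_div_iff₀ hb0]
      linarith [hQ_lb]
    have hbQ0 : 0 ≤ b * phi1b b x := mul_nonneg hb0.le hQpos.le
    rw [Psi, show (b + 1/b) * phi1b b x = b * phi1b b x + (1/b) * phi1b b x by ring]
    linarith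

end DCV15
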